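/- Let M be a globally hyperbolic spacetime with closed causal relation J^+, and let K ⊂ M be compact. With respect to a complete Riemannian metric h on M, J^+(K) = ∩_{n=1}^∞ I^+(N̄_{1/n}(K)), where N̄_ε(K) = {p ∈ M : d_h(p,K) ≤ ε}. -/
import Mathlib


open Set Metric

/-- Let `M` be a globally hyperbolic spacetime — axiomatized here via its
chronological relation `chron` (`≪`) and a closed causal relation `causal` (`⪯`), together
with the standard facts: `≪ ⊆ ⪯`, push-up (`r ≪ p ⪯ q ⟹ r ≪ q`) and approximation of any
point from the chronological past in the distance `d_h` of a complete Riemannian metric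
(for which closed `ε`-neighborhoods of compact sets are compact). Then for every compact
`K ⊆ M`: `J⁺(K) = ⋂ₙ I⁺(N̄_{1/n}(K))`. -/
theorem statement9 {M : Type*} [MetricSpace M]
    (chron causal : M → M → Prop)
    (hclosed : IsClosed {x : M × M | causal x.1 x.2})
    (hsub : ∀ p q : M, chron p q → causal p q)
    (happrox : ∀ p : M, ∀ ε : ℝ, 0 < ε → ∃ r : M, chron r p ∧ dist r p < ε)
    (hpush : ∀ r p q : M, chron r p → causal p q → chron r q)
    (K : Set M) (hK : IsCompact K)
    (hball : ∀ ε : ℝ, 0 < ε → IsCompact {p : M | ∃ k ∈ K, dist p k ≤ ε}) :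
    {q : M | ∃ p ∈ K, causal p q} =
      ⋂ n : ℕ, {q : M | ∃ p : M, (∃ k ∈ K, dist p k ≤ 1 / (n + 1)) ∧ chron p q} := by
  ext q
  constructor
  · rintro ⟨p, hpK, hpq⟩
    refine mem_iInter.2 fun n => ?_
    have hpos : (0:ℝ) < 1 / (n + 1) := by positivity
    obtain ⟨r, hr, hrd⟩ := happrox p _ hpos
    exact ⟨r, ⟨p, hpK, hrd.le⟩, hpush r p q hr hpq⟩
  · intro hq
    have h : ∀ n : ℕ, ∃ p : M, (∃ k ∈ K, dist p k ≤ 1 / (n + 1)) ∧ chron p q := by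
      simpa using fun n => mem_iInter.1 hq n
    choose p hp hchron using h
    choose k hkK hdist using hp
    have hle : ∀ n : ℕ, (1:ℝ) / (n + 1) ≤ 1 := by
      intro n
      rw [div_le_one (by positivity)]
      linarith [Nat.cast_nonneg (α := ℝ) n]
    have hpC : ∀ n, p n ∈ {p : M | ∃ k ∈ K, dist p k ≤ 1} :=
      fun n => ⟨k n, hkK n, (hdist n).trans (hle n)⟩
    obtain ⟨a, -, φ, hφ, hlim⟩ := (hball 1 one_pos).tendsto_subseq hpC
    -- k (φ n) → a
    have hdz : Filter.Tendsto (fun n => dist (p (φ n)) (k (φ n))) Filter.atTop (nhds 0) := by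
      have h1 : Filter.Tendsto (fun n : ℕ => (1:ℝ) / (φ n + 1)) Filter.atTop (nhds 0) := by
        apply Filter.Tendsto.comp (tendsto_one_div_add_atTop_nhds_zero_nat)
        exact hφ.tendsto_atTop
      refine squeeze_zero (fun n => dist_nonneg) (fun n => hdist (φ n)) h1
    have hklim : Filter.Tendsto (fun n => k (φ n)) Filter.atTop (nhds a) := by
      rw [tendsto_iff_dist_tendsto_zero]
      refine squeeze_zero (fun n => dist_nonneg) (fun n => dist_triangle _ (p (φ n)) a) ?_
      have := ((tendsto_iff_dist_tendsto_zero.1 hlim).const_add 0).comp Filter.tendsto_id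
      simpa using Filter.Tendsto.add
        (by simpa [dist_comm] using hdz) (tendsto_iff_dist_tendsto_zero.1 hlim)
    have haK : a ∈ K := hK.isClosed.mem_of_tendsto hklim (Filter.Eventually.of_forall fun n => hkK (φ n))
    refine ⟨a, haK, ?_⟩
    have hpair : Filter.Tendsto (fun n => (p (φ n), q)) Filter.atTop (nhds (a, q)) :=
      hlim.prodMk_nhds tendsto_const_nhds
    exact hclosed.mem_of_tendsto hpair
      (Filter.Eventually.of_forall fun n => hsub _ _ (hchron (φ n)))
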